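/- Let t be an odd natural number and let 0 ≤ t_1 < t_2 < t be integers such that t_1 ≢ t_2 (mod q) for every prime q dividing t. Then there exist permutations α, β of {1,…,t} such that α is a cycle of length t (its support is all of {1,…,t}), β is a product of disjoint 2-cycles (equivalently β∘β = id), and both l_∞(β, α^{t_1}) ≤ 1 and l_∞(β, α^{t_2}) ≤ 1 hold. -/

import Mathlib

namespace Stmt7Aux

/-- adjacent involution swapping (2k,2k+1); fixes t-1 (t odd). -/
def g1 (t x : ℕ) : ℕ := if x = t - 1 then x else if x % 2 = 0 then x + 1 else x - 1

/-- adjacent involution swapping (2k+1,2k+2); fixes 0. -/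
def g2 (x : ℕ) : ℕ := if x % 2 = 1 then x + 1 else x - 1

/-- conjugating map: position of x in the orbit of the zig-zag cycle. -/
def gq (t x : ℕ) : ℕ := if x % 2 = 1 then (x + 1) / 2 else if x = 0 then 0 else t - x / 2

lemma g1_lt (t x : ℕ) (hx : x < t) : g1 t x < t := by unfold g1; split_ifs <;> omega

lemma g2_lt (t x : ℕ) (ht : t % 2 = 1) (hx : x < t) : g2 x < t := by
  unfold g2; split_ifs <;> omega

lemma gq_lt (t x : ℕ) (h3 : 3 ≤ t) (hx : x < t) : gq t x < t := by
  unfold gq; split_ifs <;> omega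

lemma g1_invol (t x : ℕ) (ht : t % 2 = 1) (hx : x < t) : g1 t (g1 t x) = x := by
  unfold g1; split_ifs <;> omega

lemma g2_invol (t x : ℕ) (ht : t % 2 = 1) (hx : x < t) : g2 (g2 x) = x := by
  unfold g2; split_ifs <;> omega

lemma g1_adj (t x : ℕ) (hx : x < t) : |((g1 t x : ℤ)) - (x : ℤ)| ≤ 1 := by
  rw [abs_le]; unfold g1; split_ifs <;> omega

lemma g2_adj (t x : ℕ) (hx : x < t) : |((g2 x : ℤ)) - (x : ℤ)| ≤ 1 := by
  rw [abs_le]; unfold g2; split_ifs <;> omega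

lemma mod_one_add (t a : ℕ) (ha : a < t) : (a + 1) % t = if a + 1 = t then 0 else a + 1 := by
  split_ifs with h
  · rw [h, Nat.mod_self]
  · exact Nat.mod_eq_of_lt (by omega)

lemma gq_step (t x : ℕ) (ht : t % 2 = 1) (h3 : 3 ≤ t) (hx : x < t) :
    gq t (g1 t (g2 x)) = (gq t x + 1) % t := by
  rw [mod_one_add t _ (gq_lt t x h3 hx)]
  unfold g1 g2 gq
  split_ifs <;> first | omega | contradiction

lemma gq_inj (t x y : ℕ) (ht : t % 2 = 1) (h3 : 3 ≤ t) (hx : x < t) (hy : y < t)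
    (h : gq t x = gq t y) : x = y := by
  unfold gq at h; split_ifs at h <;> omega

end Stmt7Aux

open Stmt7Aux Fin.NatCast in
/-- Let `t` be odd, `0 ≤ t₁ < t₂ < t` with `t₁ ≢ t₂ (mod q)` for every prime `q ∣ t`.
Then there are permutations `α, β` of `{1,…,t}` (realized on `Fin t`) such that `α` is a
cycle of length `t` (support everything), `β` is a product of disjoint 2-cycles
(an involution), and `l_∞(β, α^{t₁}) ≤ 1` and `l_∞(β, α^{t₂}) ≤ 1`. -/
theorem stmt7 (t t₁ t₂ : ℕ) (ht : Odd t) (h12 : t₁ < t₂) (h2t : t₂ < t)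
    (hq : ∀ q : ℕ, q.Prime → q ∣ t → ¬ t₁ % q = t₂ % q) :
    ∃ α β : Equiv.Perm (Fin t),
      α.IsCycle ∧ α.support = Finset.univ ∧ β * β = 1 ∧
      (∀ i : Fin t, |((β i : ℕ) : ℤ) - (((α ^ t₁) i : ℕ) : ℤ)| ≤ 1) ∧
      (∀ i : Fin t, |((β i : ℕ) : ℤ) - (((α ^ t₂) i : ℕ) : ℤ)| ≤ 1) := by
  classical
  have ht2 : t % 2 = 1 := Nat.odd_iff.mp ht
  have h3 : 3 ≤ t := by omega
  haveI : NeZero t := ⟨by omega⟩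
  -- the two adjacent involutions, as permutations
  set d1 : Equiv.Perm (Fin t) :=
    ⟨fun i => ⟨g1 t i.val, g1_lt t i.val i.isLt⟩,
     fun i => ⟨g1 t i.val, g1_lt t i.val i.isLt⟩,
     fun i => Fin.ext (g1_invol t i.val ht2 i.isLt),
     fun i => Fin.ext (g1_invol t i.val ht2 i.isLt)⟩ with hd1def
  set d2 : Equiv.Perm (Fin t) :=
    ⟨fun i => ⟨g2 i.val, g2_lt t i.val ht2 i.isLt⟩,
     fun i => ⟨g2 i.val, g2_lt t i.val ht2 i.isLt⟩,
     fun i => Fin.ext (g2_invol t i.val ht2 i.isLt),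
     fun i => Fin.ext (g2_invol t i.val ht2 i.isLt)⟩ with hd2def
  have hd1sq : d1 * d1 = 1 := by
    ext i
    exact g1_invol t i.val ht2 i.isLt
  have hd2sq : d2 * d2 = 1 := by
    ext i
    exact g2_invol t i.val ht2 i.isLt
  have hd1inv : d1⁻¹ = d1 := inv_eq_of_mul_eq_one_right hd1sq
  have hd2inv : d2⁻¹ = d2 := inv_eq_of_mul_eq_one_right hd2sq
  set c : Equiv.Perm (Fin t) := d1 * d2 with hcdef
  have hcinv : c⁻¹ = d2 * d1 := by rw [hcdef, mul_inv_rev, hd1inv, hd2inv]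
  -- conjugating function
  set Q : Fin t → Fin t := fun i => ⟨gq t i.val, gq_lt t i.val h3 i.isLt⟩ with hQdef
  have hQinj : Function.Injective Q := by
    intro x y h
    exact Fin.ext (gq_inj t x.val y.val ht2 h3 x.isLt y.isLt (congrArg Fin.val h))
  have hone : ((1 : Fin t) : ℕ) = 1 := by
    rw [Fin.val_one']; exact Nat.mod_eq_of_lt (by omega)
  have hstep : ∀ i : Fin t, Q (c i) = Q i + 1 := by
    intro i
    apply Fin.ext
    have h1 : (Q (c i)).val = gq t (g1 t (g2 i.val)) := rfl
    have h2 : (Q i + 1).val = ((Q i).val + 1) % t := by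
      rw [Fin.val_add, hone]
    rw [h1, h2]
    exact gq_step t i.val ht2 h3 i.isLt
  have hpow : ∀ (m : ℕ) (i : Fin t), Q ((c ^ m) i) = Q i + (m : Fin t) := by
    intro m
    induction m with
    | zero => intro i; simp
    | succ n ih =>
      intro i
      rw [pow_succ, Equiv.Perm.mul_apply, ih (c i), hstep i, Nat.cast_succ]
      abel
  have hmove : ∀ i : Fin t, c i ≠ i := by
    intro i h
    have h1 := hstep i
    rw [h] at h1
    have h2 := congrArg Fin.val h1
    rw [Fin.val_add, hone, mod_one_add t (Q i).val (Q i).isLt] at h2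
    have := (Q i).isLt
    split_ifs at h2 <;> omega
  have z : Fin t := ⟨0, by omega⟩
  have hc_cyc : c.IsCycle := by
    refine ⟨z, hmove z, fun y _ => ?_⟩
    refine ⟨((Q y - Q z).val : ℤ), ?_⟩
    rw [zpow_natCast]
    apply hQinj
    rw [hpow, Fin.cast_val_eq_self]
    abel
  have hc_supp : c.support = Finset.univ :=
    Finset.eq_univ_iff_forall.mpr fun i => Equiv.Perm.mem_support.mpr (hmove i)
  have horder : orderOf c = t := by
    rw [hc_cyc.orderOf, hc_supp, Finset.card_univ, Fintype.card_fin]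
  -- arithmetic: s coprime to t, modular inverse
  set s : ℕ := t₂ - t₁ with hsdef
  have hst : Nat.Coprime s t := by
    rw [Nat.coprime_iff_gcd_eq_one]
    by_contra h
    have hg0 : Nat.gcd s t ≠ 0 := by
      intro h0
      have := Nat.eq_zero_of_gcd_eq_zero_right h0
      omega
    have hp : (Nat.gcd s t).minFac.Prime := Nat.minFac_prime h
    have hps : (Nat.gcd s t).minFac ∣ s := (Nat.minFac_dvd _).trans (Nat.gcd_dvd_left _ _)
    have hpt : (Nat.gcd s t).minFac ∣ t := (Nat.minFac_dvd _).trans (Nat.gcd_dvd_right _ _)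
    exact hq _ hp hpt ((Nat.modEq_iff_dvd' (le_of_lt h12)).mpr hps)
  obtain ⟨s', hs'⟩ : ∃ m, s * m % t = 1 :=
    let ⟨m, _, hm⟩ := Nat.exists_mul_mod_eq_one_of_coprime hst (by omega); ⟨m, hm⟩
  set k : ℕ := (t - 1) * s' with hkdef
  have hks : k * s ≡ t - 1 [MOD t] := by
    have h1 : s * s' ≡ 1 [MOD t] := by
      show s * s' % t = 1 % t
      rw [hs', Nat.mod_eq_of_lt (by omega)]
    calc k * s = (t - 1) * (s * s') := by ring
      _ ≡ (t - 1) * 1 [MOD t] := Nat.ModEq.mul_left _ h1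
      _ = t - 1 := by ring
  have hts_cop : Nat.Coprime (t - 1) t := by
    have h1 : t % (t - 1) = 1 := by
      rw [Nat.mod_eq_sub_mod (by omega), show t - (t - 1) = 1 by omega,
        Nat.mod_eq_of_lt (by omega)]
    show Nat.gcd (t - 1) t = 1
    rw [Nat.gcd_rec, h1, Nat.gcd_one_left]
  have hks_cop : Nat.Coprime (k * s) t := by
    have hks' : (k * s) % t = (t - 1) % t := hks
    show Nat.gcd (k * s) t = 1
    rw [Nat.gcd_comm, Nat.gcd_rec, hks', Nat.mod_eq_of_lt (by omega)]
    exact hts_cop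
  have hk_cop : Nat.Coprime k t := Nat.Coprime.coprime_dvd_left ⟨s, rfl⟩ hks_cop
  set α : Equiv.Perm (Fin t) := c ^ k with hαdef
  have hα_cyc : α.IsCycle := hc_cyc.pow_iff.mpr (by rw [horder]; exact hk_cop)
  have hα_supp : α.support = Finset.univ := by
    rw [hαdef, Equiv.Perm.support_pow_coprime (by rw [horder]; exact hk_cop), hc_supp]
  have hαs : α ^ s = c⁻¹ := by
    have h1 : (c ^ k) ^ s = c ^ (k * s) := (pow_mul c k s).symm
    have h2 : c ^ (k * s) = c ^ (t - 1) := by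
      rw [pow_eq_pow_iff_modEq, horder]
      exact hks
    have h3' : c ^ (t - 1) * c = 1 := by
      have h4 := pow_orderOf_eq_one c
      rw [horder] at h4
      rw [← pow_succ, show t - 1 + 1 = t by omega]
      exact h4
    rw [hαdef, h1, h2]
    exact eq_inv_of_mul_eq_one_left h3'
  -- conjugation by d1 inverts c
  have hd1c : d1 * c * d1 = c⁻¹ := by
    rw [hcinv, hcdef, ← mul_assoc, hd1sq, one_mul]
  have hconj : ∀ m : ℕ, d1 * c ^ m * d1 = (c ^ m)⁻¹ := by
    intro m
    calc d1 * c ^ m * d1 = d1 * c ^ m * d1⁻¹ := by rw [hd1inv]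
      _ = (d1 * c * d1⁻¹) ^ m := by rw [conj_pow]
      _ = (c⁻¹) ^ m := by rw [hd1inv, hd1c]
      _ = (c ^ m)⁻¹ := by rw [inv_pow]
  set β : Equiv.Perm (Fin t) := d1 * α ^ t₁ with hβdef
  have hαm : ∀ m : ℕ, α ^ m = c ^ (k * m) := fun m => by rw [hαdef, ← pow_mul]
  have hβsq : β * β = 1 := by
    have h1 : β * β = (d1 * c ^ (k * t₁) * d1) * c ^ (k * t₁) := by
      rw [hβdef, hαm t₁]; group
    rw [h1, hconj, inv_mul_cancel]
  have hβ2 : β = d2 * α ^ t₂ := by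
    have h1 : α ^ t₂ = α ^ s * α ^ t₁ := by
      rw [← pow_add]; congr 1; omega
    rw [h1, hαs, hcinv, hβdef, ← mul_assoc, ← mul_assoc, hd2sq, one_mul]
  refine ⟨α, β, hα_cyc, hα_supp, hβsq, ?_, ?_⟩
  · intro i
    have h1 : β i = d1 ((α ^ t₁) i) := by rw [hβdef]; rfl
    rw [h1]
    exact g1_adj t ((α ^ t₁) i).val ((α ^ t₁) i).isLt
  · intro i
    have h1 : β i = d2 ((α ^ t₂) i) := by rw [hβ2]; rfl
    rw [h1]
    exact g2_adj t ((α ^ t₂) i).val ((α ^ t₂) i).isLt
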